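/- Let R be a commutative ring and 0 ≠ f ∈ R[X]. Then f is m-irreducible in R[X] if and only if f is very strongly irreducible in R[X]. -/

import Mathlib

open Polynomial

private lemma aux_self_mul_X {R : Type*} [CommRing R] (p q : Polynomial R)
    (h : p = p * q * X) : p = 0 := by
  have hn : ∀ n : ℕ, p = p * q ^ n * X ^ n := by
    intro n
    induction n with
    | zero => simp
    | succ n ih =>
      calc p = p * q * X := h
      _ = (p * q ^ n * X ^ n) * q * X := by rw [← ih]
      _ = p * q ^ (n + 1) * X ^ (n + 1) := by ring
  ext k
  rw [hn (k + 1), Polynomial.coeff_mul_X_pow', if_neg (by omega)]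
  simp

theorem m_irreducible_iff_very_strongly_irreducible {R : Type*} [CommRing R]
    (f : Polynomial R) (hf0 : f ≠ 0) :
    (¬IsUnit f ∧ ∀ g : Polynomial R, ¬IsUnit g → g ∣ f → f ∣ g) ↔
    (¬IsUnit f ∧ ∀ g h : Polynomial R, f = g * h → IsUnit g ∨ IsUnit h) := by
  constructor
  · rintro ⟨hfu, hm⟩
    refine ⟨hfu, fun g h hgh => ?_⟩
    by_contra hc
    push_neg at hc
    obtain ⟨hg, hh⟩ := hc
    obtain ⟨a, ha⟩ := hm g hg ⟨h, hgh⟩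
    obtain ⟨b, hb⟩ := hm h hh ⟨g, by rw [hgh, mul_comm]⟩
    set e : Polynomial R := f * (a * b) with he
    have hfe : f = f * e := by
      rw [he]; nth_rewrite 1 [hgh]; rw [ha, hb]; ring
    have hee : (1 - e) * f = 0 := by
      rw [sub_mul, one_mul, mul_comm e f, ← hfe, sub_self]
    have hidem : e * e = e := by
      calc e * e = (f * e) * (a * b) := by rw [he]; ring
      _ = f * (a * b) := by rw [← hfe]
      _ = e := he.symm
    set d : Polynomial R := e + (1 - e) * X with hd
    have h2 : (1 - e) * d = (1 - e) * X := by
      rw [hd]; linear_combination (X - 1 : Polynomial R) * hidem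
    have hdf : d ∣ f := by
      refine ⟨f, ?_⟩
      have h5 : d * f = e * f + ((1 - e) * f) * X := by rw [hd]; ring
      rw [h5, hee, zero_mul, add_zero, mul_comm e f, ← hfe]
    have h1e : (1 : Polynomial R) - e = 0 := by
      by_cases hdu : IsUnit d
      · obtain ⟨u, hu⟩ := hdu
        have h3 : (1 - e : Polynomial R) = (1 - e) * (↑u⁻¹ : Polynomial R) * X := by
          calc (1 - e : Polynomial R) = (1 - e) * (d * (↑u⁻¹ : Polynomial R)) := by
                rw [← hu, Units.mul_inv, mul_one]
          _ = ((1 - e) * d) * (↑u⁻¹ : Polynomial R) := by ring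
          _ = (1 - e) * (↑u⁻¹ : Polynomial R) * X := by rw [h2]; ring
        exact aux_self_mul_X _ _ h3
      · obtain ⟨r, hr⟩ := hm d hdu hdf
        have h4 : (1 - e) * X = 0 := by
          rw [← h2, hr]
          calc (1 - e) * (f * r) = ((1 - e) * f) * r := by ring
          _ = 0 := by rw [hee, zero_mul]
        ext k
        rw [← Polynomial.coeff_mul_X, h4]
        simp
    have he1 : e = 1 := (sub_eq_zero.mp h1e).symm
    exact hfu (IsUnit.of_mul_eq_one (a * b) (by rw [← he, he1]))
  · rintro ⟨hfu, hv⟩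
    refine ⟨hfu, fun g hgu hgf => ?_⟩
    obtain ⟨k, hk⟩ := hgf
    rcases hv g k hk with h | h
    · exact absurd h hgu
    · obtain ⟨u, hu⟩ := h
      exact ⟨↑u⁻¹, by rw [hk, ← hu, mul_assoc, Units.mul_inv, mul_one]⟩
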